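/- Let M = (v_1, ..., v_m) be a list of words over alphabet Σ such that each |v_i| ≥ m, and for every letter a ∈ Σ there is at most one word v_i that is a nonempty power of a. Then there exists a prefix code W = {w_1, ..., w_m} such that w_i is commutatively equivalent to v_i for each i. -/

import Mathlib

open List

section Aux

variable {α : Type*} [DecidableEq α]

/-- Build a permutation of `l` starting with `t` copies of `z`, then all non-`z` letters,
then the remaining copies of `z`. -/
private def bld (l : List α) (z : α) (t : ℕ) : List α :=
  List.replicate t z ++ (l.filter (fun x => !(x == z)) ++ List.replicate (l.count z - t) z)

private lemma bld_perm (l : List α) (z : α) {t : ℕ} (ht : t ≤ l.count z) :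
    (bld l z t).Perm l := by
  have h1 : List.replicate t z ++ List.replicate (l.count z - t) z
      = List.replicate (l.count z) z := by
    rw [← List.replicate_add]; congr 1; omega
  calc bld l z t ~ List.replicate t z ++ (List.replicate (l.count z - t) z
        ++ l.filter (fun x => !(x == z))) := Perm.append_left _ perm_append_comm
    _ = List.replicate (l.count z) z ++ l.filter (fun x => !(x == z)) := by
        rw [← List.append_assoc, h1]
    _ = l.filter (· == z) ++ l.filter (fun x => !(x == z)) := by rw [List.filter_beq]
    _ ~ l := List.filter_append_perm _ l

private lemma bld_getElem_lt (l : List α) (z : α) {t k : ℕ} (hk : k < t)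
    (h : k < (bld l z t).length) : (bld l z t)[k] = z := by
  show (List.replicate t z ++ (l.filter (fun x => !(x == z)) ++ List.replicate (l.count z - t) z))[k]'(lt_of_lt_of_eq h (by rw [bld])) = z
  rw [List.getElem_append_left (by simpa using hk), List.getElem_replicate]

private lemma bld_getElem_t (l : List α) (z : α) {t : ℕ} (hY : ∃ y ∈ l, y ≠ z)
    (h : t < (bld l z t).length) : (bld l z t)[t] ≠ z := by
  obtain ⟨y, hy, hyz⟩ := hY
  have hA : 0 < (l.filter (fun x => !(x == z))).length := by
    rw [List.length_pos_iff]
    exact List.ne_nil_of_mem (List.mem_filter.2 ⟨hy, by simpa using hyz⟩)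
  have h1 : (List.replicate t z).length ≤ t := by simp
  show (List.replicate t z ++ (l.filter (fun x => !(x == z)) ++ List.replicate (l.count z - t) z))[t]'(lt_of_lt_of_eq h (by rw [bld])) ≠ z
  rw [List.getElem_append_right h1]
  have h2 : t - (List.replicate t z).length < (l.filter (fun x => !(x == z))).length := by
    simpa using hA
  rw [List.getElem_append_left h2]
  intro hcon
  have hmem := List.getElem_mem h2
  have := List.of_mem_filter hmem
  rw [hcon] at this
  simp at this

private lemma take_getElem_eq {l1 l2 : List α} {m k : ℕ} (h : l1.take m = l2.take m)
    (hk : k < m) (h1 : k < l1.length) (h2 : k < l2.length) : l1[k] = l2[k] := by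
  have p1 : k < (l1.take m).length := by simp [List.length_take]; omega
  have p2 : k < (l2.take m).length := by simp [List.length_take]; omega
  calc l1[k] = (l1.take m)[k]'p1 := List.getElem_take.symm
    _ = (l2.take m)[k]'p2 := by rw [List.getElem_of_eq h p1]
    _ = l2[k] := List.getElem_take

/-- A list with at least two distinct letters and length ≥ m has at least m
distinct `take m`-prefixes among its permutations. -/
private lemma card_prefixes (m : ℕ) (l : List α) (hm : m ≤ l.length)
    (hxy : ∃ x ∈ l, ∃ y ∈ l, x ≠ y) :
    m ≤ ((l.permutations.map (fun w => w.take m)).toFinset).card := by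
  rcases Nat.lt_or_ge m 2 with hm2 | hm2
  · have h1 : l.take m ∈ (l.permutations.map (fun w => w.take m)).toFinset := by
      simp only [List.mem_toFinset, List.mem_map]
      exact ⟨l, List.mem_permutations.2 (Perm.refl l), rfl⟩
    have := Finset.card_pos.2 ⟨_, h1⟩
    omega
  · have hY : ∀ z : α, ∃ y ∈ l, y ≠ z := by
      intro z
      obtain ⟨x, hx, y, hy, hne⟩ := hxy
      by_cases hxz : x = z
      · exact ⟨y, hy, by rw [← hxz]; exact fun h => hne h.symm⟩
      · exact ⟨x, hx, hxz⟩
    set D : Finset (α × ℕ) := l.toFinset.biUnion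
        (fun z => {z} ×ˢ Finset.Icc 1 (min (l.count z) (m - 1))) with hD
    have hmemD : ∀ p ∈ D, p.1 ∈ l ∧ 1 ≤ p.2 ∧ p.2 ≤ l.count p.1 ∧ p.2 ≤ m - 1 := by
      intro p hp
      rw [hD, Finset.mem_biUnion] at hp
      obtain ⟨z, hz, hp⟩ := hp
      rw [Finset.mem_product, Finset.mem_singleton] at hp
      obtain ⟨rfl, hp2⟩ := hp
      rw [Finset.mem_Icc] at hp2
      exact ⟨List.mem_toFinset.1 hz, hp2.1, le_of_le_of_eq (hp2.2.trans (min_le_left _ _)) rfl,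
        hp2.2.trans (min_le_right _ _)⟩
    have hcardD : m ≤ D.card := by
      rw [hD, Finset.card_biUnion (by
        intro x hx y hy hxy'
        simp only [Finset.disjoint_left, Finset.mem_product, Finset.mem_singleton]
        rintro ⟨a, b⟩ ⟨rfl, -⟩ ⟨h, -⟩
        exact hxy' h)]
      have hc : ∀ z ∈ l.toFinset,
          (({z} : Finset α) ×ˢ Finset.Icc 1 (min (l.count z) (m - 1))).card
            = min (l.count z) (m - 1) := by
        intro z _
        rw [Finset.card_product, Finset.card_singleton, Nat.card_Icc, one_mul]
        omega
      rw [Finset.sum_congr rfl hc]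
      by_cases hcnt : ∀ z ∈ l.toFinset, l.count z ≤ m - 1
      · have he : ∑ z ∈ l.toFinset, min (l.count z) (m - 1) = ∑ z ∈ l.toFinset, l.count z :=
          Finset.sum_congr rfl fun z hz => min_eq_left (hcnt z hz)
        rw [he]
        have : ∑ z ∈ l.toFinset, l.count z = l.length := by
          have := Multiset.toFinset_sum_count_eq (l : Multiset α)
          simpa using this
        omega
      · push_neg at hcnt
        obtain ⟨z0, hz0, hz0c⟩ := hcnt
        obtain ⟨y0, hy0, hy0z⟩ := hY z0
        have hsub : ({z0, y0} : Finset α) ⊆ l.toFinset := by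
          intro u hu
          rw [Finset.mem_insert, Finset.mem_singleton] at hu
          rcases hu with rfl | rfl
          · exact hz0
          · exact List.mem_toFinset.2 hy0
        have hle := Finset.sum_le_sum_of_subset (f := fun z => min (l.count z) (m - 1)) hsub
        rw [Finset.sum_pair (fun h => hy0z h.symm)] at hle
        have h1 : min (l.count z0) (m - 1) = m - 1 := min_eq_right (by omega)
        have h2 : 1 ≤ min (l.count y0) (m - 1) :=
          le_min (List.count_pos_iff.2 hy0) (by omega)
        have h3 : m ≤ min (l.count z0) (m - 1) + min (l.count y0) (m - 1) := by omega
        exact h3.trans hle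
    refine le_trans hcardD (Finset.card_le_card_of_injOn
      (fun p => (bld l p.1 p.2).take m) ?_ ?_)
    · intro p hp
      obtain ⟨hp1, hp2, hp3, hp4⟩ := hmemD p hp
      simp only [Finset.mem_coe, List.mem_toFinset, List.mem_map]
      exact ⟨bld l p.1 p.2, List.mem_permutations.2 (bld_perm l p.1 hp3), rfl⟩
    · rintro ⟨z, t⟩ hp ⟨z', t'⟩ hq heq
      obtain ⟨hp1, hp2, hp3, hp4⟩ := hmemD _ hp
      obtain ⟨hq1, hq2, hq3, hq4⟩ := hmemD _ hq
      simp only at heq hp1 hp2 hp3 hp4 hq1 hq2 hq3 hq4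
      have hlen1 : (bld l z t).length = l.length := (bld_perm l z hp3).length_eq
      have hlen2 : (bld l z' t').length = l.length := (bld_perm l z' hq3).length_eq
      have hzz : z = z' := by
        have e0 := take_getElem_eq heq (by omega : 0 < m) (by omega) (by omega)
        rw [bld_getElem_lt l z (by omega), bld_getElem_lt l z' (by omega)] at e0
        exact e0
      subst hzz
      have htt : t = t' := by
        by_contra hne'
        rcases Nat.lt_or_ge t t' with h | h
        · have e := take_getElem_eq heq (by omega : t < m) (by omega) (by omega)
          rw [bld_getElem_lt l z h] at e
          exact bld_getElem_t l z (hY z) (by omega) e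
        · have h' : t' < t := by omega
          have e := take_getElem_eq heq (by omega : t' < m) (by omega) (by omega)
          rw [bld_getElem_lt l z h'] at e
          exact bld_getElem_t l z (hY z) (by omega) e.symm
      rw [htt]

private lemma const_prefixes (m : ℕ) (l : List α) (a : α) (hnil : l ≠ []) (hm : m ≤ l.length)
    (hall : ∀ x ∈ l, x = a) :
    (l.permutations.map (fun w => w.take m)).toFinset = {List.replicate m a} := by
  have hl : l = List.replicate l.length a := List.eq_replicate_iff.2 ⟨rfl, hall⟩
  have htk : l.take m = List.replicate m a := by
    conv_lhs => rw [hl]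
    rw [List.take_replicate]
    congr 1
    omega
  ext w
  simp only [List.mem_toFinset, List.mem_map, List.mem_permutations, Finset.mem_singleton]
  constructor
  · rintro ⟨u, hu, rfl⟩
    have hu' : u = List.replicate l.length a :=
      List.eq_replicate_iff.2 ⟨hu.length_eq, fun b hb => hall b (hu.subset hb)⟩
    rw [hu', List.take_replicate]
    congr 1
    omega
  · rintro rfl
    exact ⟨l, Perm.refl l, htk⟩

end Aux

/-- Let M = (v_1, ..., v_m) be a list of nonempty words over alphabet Σ such
that each |v_i| ≥ m, and for every letter a there is at most one word v_i that is a
nonempty power of a.  Then there exists a prefix code W = {w_1,...,w_m} with w_i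
commutatively equivalent to v_i for each i. -/
theorem stmt0 {Sigma : Type*} (m : ℕ) (v : Fin m → List Sigma)
    (hne : ∀ i, v i ≠ [])
    (hlen : ∀ i, m ≤ (v i).length)
    (hpow : ∀ a : Sigma, ∀ i j : Fin m,
      (v i ≠ [] ∧ ∀ x ∈ v i, x = a) → (v j ≠ [] ∧ ∀ x ∈ v j, x = a) → i = j) :
    ∃ w : Fin m → List Sigma, (∀ i, (w i).Perm (v i)) ∧
      ∀ i j : Fin m, i ≠ j → ¬ (w i <+: w j) := by
  classical
  set t : Fin m → Finset (List Sigma) :=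
    fun i => ((v i).permutations.map (fun w => w.take m)).toFinset with ht
  have hall : ∀ s : Finset (Fin m), s.card ≤ (s.biUnion t).card := by
    intro s
    by_cases hc : ∀ i ∈ s, ∀ x ∈ v i, ∀ y ∈ v i, x = y
    · rcases Nat.eq_zero_or_pos m with rfl | hm0
      · have : s = ∅ := Finset.eq_empty_of_isEmpty s
        simp [this]
      · refine Finset.card_le_card_of_injOn
          (fun i => List.replicate m ((v i).head (hne i))) ?_ ?_
        · intro i hi
          rw [Finset.mem_coe, Finset.mem_biUnion]
          refine ⟨i, hi, ?_⟩
          have hconst := const_prefixes m (v i) ((v i).head (hne i)) (hne i) (hlen i)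
            (fun x hx => hc i hi x hx _ (List.head_mem (hne i)))
          rw [ht]
          simp only
          rw [hconst]
          simp
        · intro i hi j hj hij
          have ha : (v i).head (hne i) = (v j).head (hne j) :=
            List.replicate_right_injective (by omega) hij
          exact hpow ((v i).head (hne i)) i j
            ⟨hne i, fun x hx => hc i hi x hx _ (List.head_mem (hne i))⟩
            ⟨hne j, fun x hx => by rw [ha]; exact hc j hj x hx _ (List.head_mem (hne j))⟩
    · push_neg at hc
      obtain ⟨i0, hi0, x, hx, y, hy, hxyne⟩ := hc
      calc s.card ≤ Finset.univ.card := Finset.card_le_univ s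
        _ = m := by simp
        _ ≤ (t i0).card := card_prefixes m (v i0) (hlen i0) ⟨x, hx, y, hy, hxyne⟩
        _ ≤ (s.biUnion t).card := Finset.card_le_card (Finset.subset_biUnion_of_mem t hi0)
  obtain ⟨f, hfinj, hf⟩ := (Finset.all_card_le_biUnion_card_iff_exists_injective t).1 hall
  have hw : ∀ i, ∃ u : List Sigma, u.Perm (v i) ∧ u.take m = f i := by
    intro i
    have h := hf i
    rw [ht] at h
    simp only [List.mem_toFinset, List.mem_map, List.mem_permutations] at h
    obtain ⟨u, hu1, hu2⟩ := h
    exact ⟨u, hu1, hu2⟩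
  choose w hw1 hw2 using hw
  refine ⟨w, hw1, ?_⟩
  intro i j hij hpre
  apply hij
  apply hfinj
  obtain ⟨r, hr⟩ := hpre
  have hwl : m ≤ (w i).length := by
    rw [(hw1 i).length_eq]
    exact hlen i
  rw [← hw2 i, ← hw2 j, ← hr, List.take_append_of_le_length hwl]
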